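/- Let (R_i, t_i) be a perfectoid tower arising from (R_0, I_0) with a system of perfectoid pillars (I_i). Then for every j ≥ 0 and every element f ∈ R_j^{s♭}, f generates the ideal I_j^{s♭} if and only if for every i ≥ 0 the component Φ^{(j)}_i(f) generates the ideal I_{j+i}·(R_{j+i}/I_0R_{j+i}) of R_{j+i}/I_0R_{j+i}. In particular, I_j^{s♭} is a principal ideal and (I_{j+1}^{s♭})^p = I_j^{s♭}R_{j+1}^{s♭}. -/
import Mathlib
set_option synthInstance.maxHeartbeats 1000000
set_option maxHeartbeats 1000000
universe u
namespace PaperTower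

variable {R : ℕ → Type u} [∀ i, CommRing (R i)]

/-- The set of `J`-torsion elements of a commutative ring. -/
def torSet {A : Type*} [CommRing A] (J : Ideal A) : Set A :=
  {x | ∀ a ∈ J, ∃ n : ℕ, 0 < n ∧ a ^ n * x = 0}

/-- Cast ring homomorphism between quotients at equal indices. -/
def qcast (I : ∀ i, Ideal (R i)) {m n : ℕ} (h : m = n) :
    (R m ⧸ I m) →+* (R n ⧸ I n) := by subst h; exact RingHom.id _

/-- The `j`-th small tilt (inverse quasi-perfection) of a tower, as a subring of the
product of the quotients, consisting of sequences compatible with the Frobenius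
projections `F`. -/
def Tilt (I : ∀ i, Ideal (R i))
    (F : ∀ i, (R (i + 1) ⧸ I (i + 1)) →+* (R i ⧸ I i)) (j : ℕ) :
    Subring (∀ i, R (j + i) ⧸ I (j + i)) where
  carrier := {a | ∀ i, F (j + i) (a (i + 1)) = a i}
  zero_mem' := by
    intro i
    show F (j + i) 0 = 0
    simp
  one_mem' := by
    intro i
    show F (j + i) 1 = 1
    simp
  add_mem' := by
    intro a b ha hb i
    show F (j + i) (a (i + 1) + b (i + 1)) = a i + b i
    rw [map_add, ha i, hb i]
  mul_mem' := by
    intro a b ha hb i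
    show F (j + i) (a (i + 1) * b (i + 1)) = a i * b i
    rw [map_mul, ha i, hb i]
  neg_mem' := by
    intro a ha i
    show F (j + i) (-(a (i + 1))) = -(a i)
    rw [map_neg, ha i]

/-- The `m`-th projection `Φ^{(j)}_m` from the `j`-th small tilt. -/
def proj (I : ∀ i, Ideal (R i))
    (F : ∀ i, (R (i + 1) ⧸ I (i + 1)) →+* (R i ⧸ I i)) (j m : ℕ) :
    Tilt I F j →+* (R (j + m) ⧸ I (j + m)) :=
  (Pi.evalRingHom _ m).comp (Tilt I F j).subtype


section Aux

variable (p : ℕ)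
  (t : ∀ i, R i →+* R (i + 1))
  (I : ∀ i, Ideal (R i))
  (tbar : ∀ i, (R i ⧸ I i) →+* (R (i + 1) ⧸ I (i + 1)))
  (F : ∀ i, (R (i + 1) ⧸ I (i + 1)) →+* (R i ⧸ I i))
  (Ipill : ∀ i, Ideal (R i))

/-- `Pq l` : the pillar ideal in the quotient. -/
def Pq (l : ℕ) : Ideal (R l ⧸ I l) := (Ipill l).map (Ideal.Quotient.mk (I l))

lemma Fzero (htbarInj : ∀ i, Function.Injective (tbar i))
    (hF : ∀ i (x : R (i + 1) ⧸ I (i + 1)), tbar i (F i x) = x ^ p)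
    (l : ℕ) (x : R (l + 1) ⧸ I (l + 1)) :
    F l x = 0 ↔ x ^ p = 0 := by
  constructor
  · intro h
    rw [← hF l x, h, map_zero]
  · intro h
    apply htbarInj l
    rw [hF l x, h, map_zero]

lemma Pq_zero (hpill0 : Ipill 0 = I 0) : Pq I Ipill 0 = ⊥ := by
  rw [Pq, hpill0, Ideal.map_quotient_self]

lemma mem_Pq_succ
    (hpill : ∀ i, Ideal.comap (F i) ((Ipill i).map (Ideal.Quotient.mk (I i)))
        = (Ipill (i + 1)).map (Ideal.Quotient.mk (I (i + 1))))
    (l : ℕ) (x : R (l + 1) ⧸ I (l + 1)) :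
    x ∈ Pq I Ipill (l + 1) ↔ F l x ∈ Pq I Ipill l := by
  rw [Pq, Pq, ← hpill l]
  exact Iff.rfl

lemma nilP (hp : p.Prime)
    (htbarInj : ∀ i, Function.Injective (tbar i))
    (hF : ∀ i (x : R (i + 1) ⧸ I (i + 1)), tbar i (F i x) = x ^ p)
    (hpill0 : Ipill 0 = I 0)
    (hpill : ∀ i, Ideal.comap (F i) ((Ipill i).map (Ideal.Quotient.mk (I i)))
        = (Ipill (i + 1)).map (Ideal.Quotient.mk (I (i + 1)))) :
    ∀ (l : ℕ) (x : R l ⧸ I l), x ∈ Pq I Ipill l → x ^ p ^ l = 0 := by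
  intro l
  induction l with
  | zero =>
    intro x hx
    rw [Pq_zero I Ipill hpill0] at hx
    simpa using hx
  | succ n ih =>
    intro x hx
    have h1 : F n x ∈ Pq I Ipill n := (mem_Pq_succ I F Ipill hpill n x).1 hx
    have h2 : (F n x) ^ p ^ n = 0 := ih _ h1
    have h3 : F n (x ^ p ^ n) = 0 := by rw [map_pow]; exact h2
    have h4 : (x ^ p ^ n) ^ p = 0 := (Fzero p I tbar F htbarInj hF n _).1 h3
    rw [← pow_mul] at h4
    rw [pow_succ]
    exact h4

/-- image of a generator of `Pq (l+1)` under `F l` generates `Pq l`. -/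
lemma genF (hFsurj : ∀ i, Function.Surjective (F i))
    (hpill : ∀ i, Ideal.comap (F i) ((Ipill i).map (Ideal.Quotient.mk (I i)))
        = (Ipill (i + 1)).map (Ideal.Quotient.mk (I (i + 1))))
    (l : ℕ) (g : R (l + 1) ⧸ I (l + 1)) (hg : Ideal.span {g} = Pq I Ipill (l + 1)) :
    Ideal.span {F l g} = Pq I Ipill l := by
  apply le_antisymm
  · rw [Ideal.span_le, Set.singleton_subset_iff]
    have hgmem : g ∈ Pq I Ipill (l + 1) := by
      rw [← hg]; exact Ideal.mem_span_singleton_self g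
    exact (mem_Pq_succ I F Ipill hpill l g).1 hgmem
  · intro u hu
    obtain ⟨w, hw⟩ := hFsurj l u
    have hwmem : w ∈ Pq I Ipill (l + 1) := by
      rw [mem_Pq_succ I F Ipill hpill l w, hw]; exact hu
    rw [← hg, Ideal.mem_span_singleton] at hwmem
    obtain ⟨c, hc⟩ := hwmem
    rw [← hw, hc, map_mul]
    exact Ideal.mul_mem_right _ _ (Ideal.mem_span_singleton_self _)

/-- composite of transition maps `R 1 → R (l+1)`. -/
def tau : ∀ l : ℕ, R 1 →+* R (l + 1)
  | 0 => RingHom.id _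
  | (l+1) => (t (l + 1)).comp (tau l)

/-- composite of `tbar`s, `A 1 → A (l+1)`. -/
def tbT : ∀ l : ℕ, (R 1 ⧸ I 1) →+* (R (l + 1) ⧸ I (l + 1))
  | 0 => RingHom.id _
  | (l+1) => (tbar (l + 1)).comp (tbT l)

/-- composite of `F`s going down, `A (l+1) → A 1`. -/
def Fdown : ∀ l : ℕ, (R (l + 1) ⧸ I (l + 1)) →+* (R 1 ⧸ I 1)
  | 0 => RingHom.id _
  | (l+1) => (Fdown l).comp (F (l + 1))

lemma frobDown (hF : ∀ i (x : R (i + 1) ⧸ I (i + 1)), tbar i (F i x) = x ^ p) :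
    ∀ (l : ℕ) (x : R (l + 1) ⧸ I (l + 1)),
      tbT I tbar l (Fdown I F l x) = x ^ p ^ l := by
  intro l
  induction l with
  | zero => intro x; simp [tbT, Fdown]
  | succ n ih =>
    intro x
    show tbar (n+1) (tbT I tbar n (Fdown I F n (F (n+1) x))) = x ^ p ^ (n+1)
    rw [ih (F (n+1) x), map_pow, hF (n+1) x, ← pow_mul, ← pow_succ']

lemma tbT_mk (htbar : ∀ i (x : R i),
      tbar i (Ideal.Quotient.mk (I i) x) = Ideal.Quotient.mk (I (i + 1)) (t i x)) :
    ∀ (l : ℕ) (x : R 1),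
      tbT I tbar l (Ideal.Quotient.mk (I 1) x) = Ideal.Quotient.mk (I (l + 1)) (tau t l x) := by
  intro l
  induction l with
  | zero => intro x; rfl
  | succ n ih =>
    intro x
    show tbar (n+1) (tbT I tbar n (Ideal.Quotient.mk (I 1) x)) = _
    rw [ih x, htbar (n+1)]
    rfl

lemma genDown (hFsurj : ∀ i, Function.Surjective (F i))
    (hpill : ∀ i, Ideal.comap (F i) ((Ipill i).map (Ideal.Quotient.mk (I i)))
        = (Ipill (i + 1)).map (Ideal.Quotient.mk (I (i + 1)))) :
    ∀ (l : ℕ) (g : R (l + 1) ⧸ I (l + 1)), Ideal.span {g} = Pq I Ipill (l + 1) →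
      Ideal.span {Fdown I F l g} = Pq I Ipill 1 := by
  intro l
  induction l with
  | zero => intro g hg; exact hg
  | succ n ih =>
    intro g hg
    have h1 : Ideal.span {F (n+1) g} = Pq I Ipill (n+1) :=
      genF I F Ipill hFsurj hpill (n+1) g hg
    exact ih (F (n+1) g) h1

lemma I1eEq (I1e : ∀ i, Ideal (R (i + 1)))
    (hI1es : ∀ i, I1e (i + 1) = (I1e i).map (t (i + 1))) :
    ∀ l, I1e l = (I1e 0).map (tau t l) := by
  intro l
  induction l with
  | zero => simp [tau, Ideal.map_id]
  | succ n ih =>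
    rw [hI1es n, ih, Ideal.map_map]
    rfl

lemma kerPow (hp : p.Prime)
    (htbar : ∀ i (x : R i),
      tbar i (Ideal.Quotient.mk (I i) x) = Ideal.Quotient.mk (I (i + 1)) (t i x))
    (htbarInj : ∀ i, Function.Injective (tbar i))
    (hF : ∀ i (x : R (i + 1) ⧸ I (i + 1)), tbar i (F i x) = x ^ p)
    (hFsurj : ∀ i, Function.Surjective (F i))
    (I1e : ∀ i, Ideal (R (i + 1)))
    (hI1prin : (I1e 0).IsPrincipal)
    (hI1es : ∀ i, I1e (i + 1) = (I1e i).map (t (i + 1)))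
    (hkerF : ∀ i, RingHom.ker (F i) = (I1e i).map (Ideal.Quotient.mk (I (i + 1))))
    (hpill0 : Ipill 0 = I 0) (hpill1 : Ipill 1 = I1e 0)
    (hpill : ∀ i, Ideal.comap (F i) ((Ipill i).map (Ideal.Quotient.mk (I i)))
        = (Ipill (i + 1)).map (Ideal.Quotient.mk (I (i + 1))))
    (l : ℕ) (g : R (l + 1) ⧸ I (l + 1)) (hg : Ideal.span {g} = Pq I Ipill (l + 1)) :
    RingHom.ker (F l) = Ideal.span {g ^ p ^ l} := by
  obtain ⟨g', hg'⟩ := hI1prin.principal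
  -- hg' : I1e 0 = span {g'} ??? check direction
  have hker0 : RingHom.ker (F 0) = Ideal.span {Ideal.Quotient.mk (I 1) g'} := by
    rw [hkerF 0, hg', Ideal.submodule_span_eq, Ideal.map_span, Set.image_singleton]
  have hP1 : Pq I Ipill 1 = Ideal.span {Ideal.Quotient.mk (I 1) g'} := by
    rw [Pq, hpill1, hg', Ideal.submodule_span_eq, Ideal.map_span, Set.image_singleton]
  -- the generator pushed down
  have hdown : Ideal.span {Fdown I F l g} = Pq I Ipill 1 :=
    genDown I F Ipill hFsurj hpill l g hg
  -- mk g' ∈ span {Fdown g}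
  have hmem : Ideal.Quotient.mk (I 1) g' ∈ Ideal.span {Fdown I F l g} := by
    rw [hdown, hP1]; exact Ideal.mem_span_singleton_self _
  rw [Ideal.mem_span_singleton] at hmem
  obtain ⟨c, hc⟩ := hmem
  -- κ : generator of ker (F l)
  have hkerl : RingHom.ker (F l) = Ideal.span {Ideal.Quotient.mk (I (l+1)) (tau t l g')} := by
    rw [hkerF l, I1eEq t I1e hI1es l, hg', Ideal.submodule_span_eq, Ideal.map_map, Ideal.map_span, Set.image_singleton]
    rfl
  apply le_antisymm
  · rw [hkerl, Ideal.span_le, Set.singleton_subset_iff]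
    have : Ideal.Quotient.mk (I (l+1)) (tau t l g')
        = tbT I tbar l (Ideal.Quotient.mk (I 1) g') := (tbT_mk t I tbar htbar l g').symm
    rw [this, hc, map_mul, frobDown p I tbar F hF l g]
    exact Ideal.mul_mem_right _ _ (Ideal.mem_span_singleton_self _)
  · rw [Ideal.span_le, Set.singleton_subset_iff]
    have hFg : F l g ∈ Pq I Ipill l := by
      have hgmem : g ∈ Pq I Ipill (l + 1) := by
        rw [← hg]; exact Ideal.mem_span_singleton_self g
      exact (mem_Pq_succ I F Ipill hpill l g).1 hgmem
    have h0 : (F l g) ^ p ^ l = 0 :=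
      nilP p I tbar F Ipill hp htbarInj hF hpill0 hpill l (F l g) hFg
    show F l (g ^ p ^ l) = 0
    rw [map_pow]
    exact h0

lemma lemE (hp : p.Prime)
    (htbar : ∀ i (x : R i),
      tbar i (Ideal.Quotient.mk (I i) x) = Ideal.Quotient.mk (I (i + 1)) (t i x))
    (htbarInj : ∀ i, Function.Injective (tbar i))
    (hF : ∀ i (x : R (i + 1) ⧸ I (i + 1)), tbar i (F i x) = x ^ p)
    (hFsurj : ∀ i, Function.Surjective (F i))
    (I1e : ∀ i, Ideal (R (i + 1)))
    (hI1prin : (I1e 0).IsPrincipal)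
    (hI1es : ∀ i, I1e (i + 1) = (I1e i).map (t (i + 1)))
    (hkerF : ∀ i, RingHom.ker (F i) = (I1e i).map (Ideal.Quotient.mk (I (i + 1))))
    (hpill0 : Ipill 0 = I 0) (hpill1 : Ipill 1 = I1e 0)
    (hpill : ∀ i, Ideal.comap (F i) ((Ipill i).map (Ideal.Quotient.mk (I i)))
        = (Ipill (i + 1)).map (Ideal.Quotient.mk (I (i + 1))))
    (n : ℕ) (g1 : R (n + 1) ⧸ I (n + 1)) (g2 : R (n + 2) ⧸ I (n + 2))
    (h2 : Ideal.span {g2} = Pq I Ipill (n + 2))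
    (hFg : F (n + 1) g2 = g1)
    (z : R (n + 1) ⧸ I (n + 1)) (hz : z * g1 = 0) :
    ∃ u, u * g2 = 0 ∧ F n (F (n + 1) u) = F n z := by
  obtain ⟨v, hv⟩ := hFsurj (n + 1) z
  have hker : RingHom.ker (F (n + 1)) = Ideal.span {g2 ^ p ^ (n + 1)} :=
    kerPow p t I tbar F Ipill hp htbar htbarInj hF hFsurj I1e hI1prin hI1es hkerF
      hpill0 hpill1 hpill (n + 1) g2 h2
  have he : v * g2 ∈ RingHom.ker (F (n + 1)) := by
    rw [RingHom.mem_ker, map_mul, hv, hFg, hz]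
  rw [hker, Ideal.mem_span_singleton] at he
  obtain ⟨w, hw⟩ := he
  have hppos : 0 < p := hp.pos
  have hP1 : 1 ≤ p ^ (n + 1) := Nat.one_le_pow _ _ hppos
  refine ⟨v - g2 ^ (p ^ (n + 1) - 1) * w, ?_, ?_⟩
  · have h2' : g2 ^ (p ^ (n + 1) - 1) * w * g2 = g2 ^ p ^ (n + 1) * w := by
      rw [mul_right_comm, ← pow_succ]
      have : p ^ (n + 1) - 1 + 1 = p ^ (n + 1) := by omega
      rw [this]
    rw [sub_mul, hw, h2', sub_self]
  · have hg2P : g2 ∈ Pq I Ipill (n + 2) := by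
      rw [← h2]; exact Ideal.mem_span_singleton_self g2
    have hnil : g2 ^ p ^ (n + 2) = 0 :=
      nilP p I tbar F Ipill hp htbarInj hF hpill0 hpill (n + 2) g2 hg2P
    have hle : p ^ (n + 2) ≤ (p ^ (n + 1) - 1) * (p * p) := by
      have e1 : p ^ (n + 1) * (p * p) = p ^ (n + 3) := by
        rw [show p * p = p ^ 2 from (sq p).symm, ← pow_add]
      have e2 : p * p ≤ p ^ (n + 2) := by
        calc p * p = p ^ 2 := (sq p).symm
        _ ≤ p ^ (n + 2) := Nat.pow_le_pow_right hppos (by omega)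
      have e3 : p ^ (n + 2) * 2 ≤ p ^ (n + 3) := by
        have : p ^ (n + 3) = p ^ (n + 2) * p := by rw [← pow_succ]
        rw [this]
        exact Nat.mul_le_mul_left _ hp.two_le
      have e0 : (p ^ (n + 1) - 1) * (p * p) = p ^ (n + 1) * (p * p) - (p * p) := by
        rw [Nat.sub_mul, one_mul]
      omega
    have hy : (g2 ^ (p ^ (n + 1) - 1) * w) ^ (p * p) = 0 := by
      rw [mul_pow, ← pow_mul]
      have hdec : (p ^ (n + 1) - 1) * (p * p)
          = p ^ (n + 2) + ((p ^ (n + 1) - 1) * (p * p) - p ^ (n + 2)) := by omega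
      rw [hdec, pow_add, hnil, zero_mul, zero_mul]
    have h1 : (F (n + 1) (g2 ^ (p ^ (n + 1) - 1) * w)) ^ p = 0 := by
      rw [← map_pow]
      apply (Fzero p I tbar F htbarInj hF (n + 1) _).2
      rw [← pow_mul]
      exact hy
    have h0 : F n (F (n + 1) (g2 ^ (p ^ (n + 1) - 1) * w)) = 0 :=
      (Fzero p I tbar F htbarInj hF n _).2 h1
    rw [map_sub, map_sub, hv, h0, sub_zero]

lemma divis (hp : p.Prime)
    (htbar : ∀ i (x : R i),
      tbar i (Ideal.Quotient.mk (I i) x) = Ideal.Quotient.mk (I (i + 1)) (t i x))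
    (htbarInj : ∀ i, Function.Injective (tbar i))
    (hF : ∀ i (x : R (i + 1) ⧸ I (i + 1)), tbar i (F i x) = x ^ p)
    (hFsurj : ∀ i, Function.Surjective (F i))
    (I1e : ∀ i, Ideal (R (i + 1)))
    (hI1prin : (I1e 0).IsPrincipal)
    (hI1es : ∀ i, I1e (i + 1) = (I1e i).map (t (i + 1)))
    (hkerF : ∀ i, RingHom.ker (F i) = (I1e i).map (Ideal.Quotient.mk (I (i + 1))))
    (hpill0 : Ipill 0 = I 0) (hpill1 : Ipill 1 = I1e 0)
    (hpill : ∀ i, Ideal.comap (F i) ((Ipill i).map (Ideal.Quotient.mk (I i)))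
        = (Ipill (i + 1)).map (Ideal.Quotient.mk (I (i + 1))))
    (j : ℕ) (f a : Tilt I F j)
    (hf : ∀ i, Ideal.span {f.1 i} = Pq I Ipill (j + i))
    (ha : ∀ i, a.1 i ∈ Pq I Ipill (j + i)) :
    ∃ c : Tilt I F j, a = f * c := by
  classical
  have hd : ∀ i, ∃ dd, a.1 i = f.1 i * dd := by
    intro i
    exact Ideal.mem_span_singleton.1 (by rw [hf i]; exact ha i)
  choose d hdspec using hd
  have htilt : ∀ i, F (j + i) (a.1 (i + 1)) = a.1 i := a.2
  have hftilt : ∀ i, F (j + i) (f.1 (i + 1)) = f.1 i := f.2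
  -- the key identity: F (d (i+1)) * f i = a i
  have hkey : ∀ i, F (j + i) (d (i + 1)) * f.1 i = a.1 i := by
    intro i
    rw [← hftilt i, ← map_mul, mul_comm (d (i+1)) (f.1 (i+1)), ← hdspec (i + 1), htilt i]
  set Good : ∀ i, (R (j + i) ⧸ I (j + i)) → Prop := fun i c =>
    c * f.1 i = a.1 i ∧ ∃ z, z * f.1 (i + 1) = 0
      ∧ c = F (j + i) (d (i + 1)) + F (j + i) z with hGood
  have hbase : Good 0 (F j (d 1)) := by
    refine ⟨hkey 0, 0, by rw [zero_mul], by simp⟩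
  have hstep : ∀ i (c : R (j + i) ⧸ I (j + i)), Good i c →
      ∃ c', Good (i + 1) c' ∧ F (j + i) c' = c := by
    intro i c hc
    obtain ⟨hc1, z, hz, hcz⟩ := hc
    set ε : R (j + (i+1)) ⧸ I (j + (i+1)) := F (j + (i+1)) (d (i + 2)) - d (i + 1) with hε
    have hεf : ε * f.1 (i + 1) = 0 := by
      rw [hε, sub_mul, hkey (i + 1), mul_comm (d (i+1)) (f.1 (i+1)), ← hdspec (i + 1), sub_self]
    have hzε : (z - ε) * f.1 (i + 1) = 0 := by
      rw [sub_mul, hz, hεf, sub_zero]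
    obtain ⟨u, hu1, hu2⟩ := lemE p t I tbar F Ipill hp htbar htbarInj hF hFsurj I1e hI1prin
      hI1es hkerF hpill0 hpill1 hpill (j + i) (f.1 (i + 1)) (f.1 (i + 2))
      (hf (i + 2)) (hftilt (i + 1)) (z - ε) hzε
    refine ⟨F (j + (i+1)) (d (i + 2)) + F (j + (i+1)) u, ⟨?_, u, hu1, rfl⟩, ?_⟩
    · have h3 : F (j + (i+1)) u * f.1 (i + 1) = 0 := by
        rw [← hftilt (i + 1), ← map_mul, hu1, map_zero]
      rw [add_mul, hkey (i + 1), h3, add_zero]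
    · have e1 : F (j + i) (F (j + (i+1)) u) = F (j + i) z - F (j + i) ε := by
        have h5 := hu2
        rw [map_sub] at h5
        exact h5
      have e2 : F (j + i) ε = F (j + i) (F (j + (i+1)) (d (i + 2))) - F (j + i) (d (i+1)) := by
        rw [hε, map_sub]
      rw [map_add, e1, hcz]
      rw [e2]
      ring
  let T : ℕ → Type _ := fun i => {c : R (j + i) ⧸ I (j + i) // Good i c}
  let C : ∀ i, T i := fun i => Nat.rec (motive := T) ⟨F j (d 1), hbase⟩
    (fun i prev => ⟨Classical.choose (hstep i prev.1 prev.2),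
      (Classical.choose_spec (hstep i prev.1 prev.2)).1⟩) i
  have hlink : ∀ i, F (j + i) ((C (i + 1)).1) = (C i).1 := by
    intro i
    exact (Classical.choose_spec (hstep i (C i).1 (C i).2)).2
  refine ⟨⟨fun i => (C i).1, fun i => hlink i⟩, ?_⟩
  apply Subtype.ext
  funext i
  show a.1 i = f.1 i * (C i).1
  rw [← (C i).2.1, mul_comm]

lemma genStep (hp : p.Prime)
    (htbar : ∀ i (x : R i),
      tbar i (Ideal.Quotient.mk (I i) x) = Ideal.Quotient.mk (I (i + 1)) (t i x))
    (htbarInj : ∀ i, Function.Injective (tbar i))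
    (hF : ∀ i (x : R (i + 1) ⧸ I (i + 1)), tbar i (F i x) = x ^ p)
    (hFsurj : ∀ i, Function.Surjective (F i))
    (I1e : ∀ i, Ideal (R (i + 1)))
    (hI1prin : (I1e 0).IsPrincipal)
    (hI1es : ∀ i, I1e (i + 1) = (I1e i).map (t (i + 1)))
    (hkerF : ∀ i, RingHom.ker (F i) = (I1e i).map (Ideal.Quotient.mk (I (i + 1))))
    (hpill0 : Ipill 0 = I 0) (hpill1 : Ipill 1 = I1e 0)
    (hpillPrin : ∀ i, (Ipill i).IsPrincipal)
    (hpill : ∀ i, Ideal.comap (F i) ((Ipill i).map (Ideal.Quotient.mk (I i)))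
        = (Ipill (i + 1)).map (Ideal.Quotient.mk (I (i + 1))))
    (l : ℕ) (gl : R l ⧸ I l) (hgl : Ideal.span {gl} = Pq I Ipill l) :
    ∃ g : R (l + 1) ⧸ I (l + 1),
      Ideal.span {g} = Pq I Ipill (l + 1) ∧ F l g = gl := by
  cases l with
  | zero =>
    obtain ⟨G1, hG1⟩ := (hpillPrin 1).principal
    have hspan1 : Ideal.span {Ideal.Quotient.mk (I 1) G1} = Pq I Ipill 1 := by
      rw [Pq, hG1, Ideal.submodule_span_eq, Ideal.map_span, Set.image_singleton]
    refine ⟨Ideal.Quotient.mk (I 1) G1, hspan1, ?_⟩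
    have hgl0 : gl = 0 := by
      rw [Pq_zero I Ipill hpill0] at hgl
      exact Ideal.span_singleton_eq_bot.1 hgl
    have hmem : Ideal.Quotient.mk (I 1) G1 ∈ Pq I Ipill 1 := by
      rw [← hspan1]; exact Ideal.mem_span_singleton_self _
    have h0 : F 0 (Ideal.Quotient.mk (I 1) G1) ∈ Pq I Ipill 0 :=
      (mem_Pq_succ I F Ipill hpill 0 _).1 hmem
    rw [Pq_zero I Ipill hpill0, Ideal.mem_bot] at h0
    rw [h0, hgl0]
  | succ n =>
    obtain ⟨w, hw⟩ := hFsurj (n + 1) gl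
    obtain ⟨G, hG⟩ := (hpillPrin (n + 2)).principal
    set mkG : R (n + 2) ⧸ I (n + 2) := Ideal.Quotient.mk (I (n + 2)) G with hmkG
    have hGspan : Ideal.span {mkG} = Pq I Ipill (n + 2) := by
      rw [Pq, hG, Ideal.submodule_span_eq, Ideal.map_span, Set.image_singleton]
    have hker : RingHom.ker (F (n + 1)) = Ideal.span {mkG ^ p ^ (n + 1)} :=
      kerPow p t I tbar F Ipill hp htbar htbarInj hF hFsurj I1e hI1prin hI1es hkerF
        hpill0 hpill1 hpill (n + 1) mkG hGspan
    have hGm : mkG ∈ Pq I Ipill (n + 2) := by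
      rw [← hGspan]; exact Ideal.mem_span_singleton_self _
    have h1 : F (n + 1) mkG ∈ Ideal.span {gl} := by
      rw [hgl]
      exact (mem_Pq_succ I F Ipill hpill (n + 1) mkG).1 hGm
    obtain ⟨c, hc⟩ := Ideal.mem_span_singleton.1 h1
    obtain ⟨Cc, hCc⟩ := hFsurj (n + 1) c
    have h2 : mkG - w * Cc ∈ RingHom.ker (F (n + 1)) := by
      rw [RingHom.mem_ker, map_sub, map_mul, hw, hCc, hc, sub_self]
    rw [hker, Ideal.mem_span_singleton] at h2
    obtain ⟨s, hs⟩ := h2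
    -- quotient by span {w}
    set π := Ideal.Quotient.mk (Ideal.span {w}) with hπ
    have hπw : π w = 0 := Ideal.Quotient.eq_zero_iff_mem.2 (Ideal.mem_span_singleton_self w)
    have hg : π mkG = π mkG ^ p ^ (n + 1) * π s := by
      have h3 := congrArg π hs
      rw [map_sub, map_mul, hπw, zero_mul, sub_zero, map_mul, map_pow] at h3
      exact h3
    have hnil : mkG ^ p ^ (n + 2) = 0 :=
      nilP p I tbar F Ipill hp htbarInj hF hpill0 hpill (n + 2) mkG hGm
    have hPP : mkG ^ (p ^ (n + 1) * p ^ (n + 1)) = 0 := by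
      have hle : p ^ (n + 2) ≤ p ^ (n + 1) * p ^ (n + 1) := by
        rw [← pow_add]
        exact Nat.pow_le_pow_right hp.pos (by omega)
      have hdec : p ^ (n + 1) * p ^ (n + 1)
          = p ^ (n + 2) + (p ^ (n + 1) * p ^ (n + 1) - p ^ (n + 2)) := by omega
      rw [hdec, pow_add, hnil, zero_mul]
    have e2 : π mkG ^ p ^ (n + 1) = 0 := by
      have h5 : π mkG ^ (p ^ (n + 1) * p ^ (n + 1)) = 0 := by
        rw [← map_pow, hPP, map_zero]
      calc π mkG ^ p ^ (n + 1)
          = (π mkG ^ p ^ (n + 1) * π s) ^ p ^ (n + 1) := by rw [← hg]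
        _ = (π mkG ^ p ^ (n + 1)) ^ p ^ (n + 1) * π s ^ p ^ (n + 1) := mul_pow _ _ _
        _ = π mkG ^ (p ^ (n + 1) * p ^ (n + 1)) * π s ^ p ^ (n + 1) := by rw [← pow_mul]
        _ = 0 := by rw [h5, zero_mul]
    have hgQ : π mkG = 0 := by rw [hg, e2, zero_mul]
    have hGw : mkG ∈ Ideal.span {w} := Ideal.Quotient.eq_zero_iff_mem.1 hgQ
    have hwP : w ∈ Pq I Ipill (n + 2) := by
      rw [mem_Pq_succ I F Ipill hpill (n + 1) w, hw, ← hgl]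
      exact Ideal.mem_span_singleton_self gl
    refine ⟨w, le_antisymm ?_ ?_, hw⟩
    · rw [Ideal.span_le, Set.singleton_subset_iff]
      exact hwP
    · rw [← hGspan, Ideal.span_le, Set.singleton_subset_iff]
      exact hGw

lemma genChain (hp : p.Prime)
    (htbar : ∀ i (x : R i),
      tbar i (Ideal.Quotient.mk (I i) x) = Ideal.Quotient.mk (I (i + 1)) (t i x))
    (htbarInj : ∀ i, Function.Injective (tbar i))
    (hF : ∀ i (x : R (i + 1) ⧸ I (i + 1)), tbar i (F i x) = x ^ p)
    (hFsurj : ∀ i, Function.Surjective (F i))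
    (I1e : ∀ i, Ideal (R (i + 1)))
    (hI1prin : (I1e 0).IsPrincipal)
    (hI1es : ∀ i, I1e (i + 1) = (I1e i).map (t (i + 1)))
    (hkerF : ∀ i, RingHom.ker (F i) = (I1e i).map (Ideal.Quotient.mk (I (i + 1))))
    (hpill0 : Ipill 0 = I 0) (hpill1 : Ipill 1 = I1e 0)
    (hpillPrin : ∀ i, (Ipill i).IsPrincipal)
    (hpill : ∀ i, Ideal.comap (F i) ((Ipill i).map (Ideal.Quotient.mk (I i)))
        = (Ipill (i + 1)).map (Ideal.Quotient.mk (I (i + 1))))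
    (j : ℕ) :
    ∃ fg : Tilt I F j, ∀ i, Ideal.span {fg.1 i} = Pq I Ipill (j + i) := by
  classical
  obtain ⟨G0, hG0⟩ := (hpillPrin j).principal
  have hbase : Ideal.span {Ideal.Quotient.mk (I j) G0} = Pq I Ipill j := by
    rw [Pq, hG0, Ideal.submodule_span_eq, Ideal.map_span, Set.image_singleton]
  let T : ℕ → Type _ := fun i => {x : R (j + i) ⧸ I (j + i) // Ideal.span {x} = Pq I Ipill (j + i)}
  have hstep : ∀ i (x : T i), ∃ y : R (j + i + 1) ⧸ I (j + i + 1),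
      Ideal.span {y} = Pq I Ipill (j + i + 1) ∧ F (j + i) y = x.1 := fun i x =>
    genStep p t I tbar F Ipill hp htbar htbarInj hF hFsurj I1e hI1prin hI1es hkerF
      hpill0 hpill1 hpillPrin hpill (j + i) x.1 x.2
  let C : ∀ i, T i := fun i => Nat.rec (motive := T) ⟨Ideal.Quotient.mk (I j) G0, hbase⟩
    (fun i prev => ⟨Classical.choose (hstep i prev),
      (Classical.choose_spec (hstep i prev)).1⟩) i
  have hlink : ∀ i, F (j + i) ((C (i + 1)).1) = (C i).1 := by
    intro i
    exact (Classical.choose_spec (hstep i (C i))).2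
  exact ⟨⟨fun i => (C i).1, fun i => hlink i⟩, fun i => (C i).2⟩

lemma memKer_iff (j : ℕ) (a : Tilt I F j) :
    a ∈ RingHom.ker ((Ideal.Quotient.mk (Pq I Ipill j)).comp (proj I F j 0))
      ↔ a.1 0 ∈ Pq I Ipill j := by
  rw [RingHom.mem_ker, RingHom.comp_apply, Ideal.Quotient.eq_zero_iff_mem]
  exact Iff.rfl

lemma propagate
    (hpill : ∀ i, Ideal.comap (F i) ((Ipill i).map (Ideal.Quotient.mk (I i)))
        = (Ipill (i + 1)).map (Ideal.Quotient.mk (I (i + 1))))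
    (j : ℕ) (a : Tilt I F j) (h0 : a.1 0 ∈ Pq I Ipill j) :
    ∀ i, a.1 i ∈ Pq I Ipill (j + i) := by
  intro i
  induction i with
  | zero => exact h0
  | succ n ih =>
    have htilt : F (j + n) (a.1 (n + 1)) = a.1 n := a.2 n
    exact (mem_Pq_succ I F Ipill hpill (j + n) (a.1 (n + 1))).2 (by rw [htilt]; exact ih)

lemma kerEqSpan (hp : p.Prime)
    (htbar : ∀ i (x : R i),
      tbar i (Ideal.Quotient.mk (I i) x) = Ideal.Quotient.mk (I (i + 1)) (t i x))
    (htbarInj : ∀ i, Function.Injective (tbar i))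
    (hF : ∀ i (x : R (i + 1) ⧸ I (i + 1)), tbar i (F i x) = x ^ p)
    (hFsurj : ∀ i, Function.Surjective (F i))
    (I1e : ∀ i, Ideal (R (i + 1)))
    (hI1prin : (I1e 0).IsPrincipal)
    (hI1es : ∀ i, I1e (i + 1) = (I1e i).map (t (i + 1)))
    (hkerF : ∀ i, RingHom.ker (F i) = (I1e i).map (Ideal.Quotient.mk (I (i + 1))))
    (hpill0 : Ipill 0 = I 0) (hpill1 : Ipill 1 = I1e 0)
    (hpill : ∀ i, Ideal.comap (F i) ((Ipill i).map (Ideal.Quotient.mk (I i)))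
        = (Ipill (i + 1)).map (Ideal.Quotient.mk (I (i + 1))))
    (j : ℕ) (f : Tilt I F j)
    (hfcomp : ∀ i, Ideal.span {f.1 i} = Pq I Ipill (j + i)) :
    RingHom.ker ((Ideal.Quotient.mk (Pq I Ipill j)).comp (proj I F j 0))
      = Ideal.span {f} := by
  apply le_antisymm
  · intro a hamem
    have h0 : a.1 0 ∈ Pq I Ipill j := (memKer_iff I F Ipill j a).1 hamem
    have hall : ∀ i, a.1 i ∈ Pq I Ipill (j + i) := propagate I F Ipill hpill j a h0
    obtain ⟨c, hc⟩ := divis p t I tbar F Ipill hp htbar htbarInj hF hFsurj I1e hI1prin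
      hI1es hkerF hpill0 hpill1 hpill j f a hfcomp hall
    rw [Ideal.mem_span_singleton]
    exact ⟨c, hc⟩
  · rw [Ideal.span_le, Set.singleton_subset_iff, SetLike.mem_coe, memKer_iff I F Ipill j f]
    have h00 : f.1 0 ∈ Pq I Ipill (j + 0) := by
      rw [← hfcomp 0]; exact Ideal.mem_span_singleton_self _
    exact h00

lemma mainIff (hp : p.Prime)
    (htbar : ∀ i (x : R i),
      tbar i (Ideal.Quotient.mk (I i) x) = Ideal.Quotient.mk (I (i + 1)) (t i x))
    (htbarInj : ∀ i, Function.Injective (tbar i))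
    (hF : ∀ i (x : R (i + 1) ⧸ I (i + 1)), tbar i (F i x) = x ^ p)
    (hFsurj : ∀ i, Function.Surjective (F i))
    (I1e : ∀ i, Ideal (R (i + 1)))
    (hI1prin : (I1e 0).IsPrincipal)
    (hI1es : ∀ i, I1e (i + 1) = (I1e i).map (t (i + 1)))
    (hkerF : ∀ i, RingHom.ker (F i) = (I1e i).map (Ideal.Quotient.mk (I (i + 1))))
    (hpill0 : Ipill 0 = I 0) (hpill1 : Ipill 1 = I1e 0)
    (hpillPrin : ∀ i, (Ipill i).IsPrincipal)
    (hpill : ∀ i, Ideal.comap (F i) ((Ipill i).map (Ideal.Quotient.mk (I i)))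
        = (Ipill (i + 1)).map (Ideal.Quotient.mk (I (i + 1))))
    (j : ℕ) (f : Tilt I F j) :
    RingHom.ker ((Ideal.Quotient.mk (Pq I Ipill j)).comp (proj I F j 0)) = Ideal.span {f}
      ↔ ∀ i, Pq I Ipill (j + i) = Ideal.span {f.1 i} := by
  constructor
  · intro h i
    obtain ⟨fg, hfg⟩ := genChain p t I tbar F Ipill hp htbar htbarInj hF hFsurj I1e hI1prin
      hI1es hkerF hpill0 hpill1 hpillPrin hpill j
    have hker_fg : RingHom.ker ((Ideal.Quotient.mk (Pq I Ipill j)).comp (proj I F j 0))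
        = Ideal.span {fg} := kerEqSpan p t I tbar F Ipill hp htbar htbarInj hF hFsurj I1e
      hI1prin hI1es hkerF hpill0 hpill1 hpill j fg hfg
    have hspan : Ideal.span {f} = Ideal.span {fg} := by rw [← h, hker_fg]
    have h1 : fg ∣ f := Ideal.mem_span_singleton.1
      (by rw [← hspan]; exact Ideal.mem_span_singleton_self f)
    have h2 : f ∣ fg := Ideal.mem_span_singleton.1
      (by rw [hspan]; exact Ideal.mem_span_singleton_self fg)
    obtain ⟨c, hc⟩ := h1
    obtain ⟨c', hc'⟩ := h2
    have hcc : f.1 i = fg.1 i * c.1 i := congrArg (fun x : Tilt I F j => x.1 i) hc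
    have hcc' : fg.1 i = f.1 i * c'.1 i := congrArg (fun x : Tilt I F j => x.1 i) hc'
    apply le_antisymm
    · rw [← hfg i, Ideal.span_le, Set.singleton_subset_iff, SetLike.mem_coe,
        Ideal.mem_span_singleton]
      exact ⟨c'.1 i, hcc'⟩
    · rw [Ideal.span_le, Set.singleton_subset_iff, SetLike.mem_coe, ← hfg i,
        Ideal.mem_span_singleton]
      exact ⟨c.1 i, hcc⟩
  · intro h
    exact kerEqSpan p t I tbar F Ipill hp htbar htbarInj hF hFsurj I1e hI1prin hI1es hkerF
      hpill0 hpill1 hpill j f (fun i => (h i).symm)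

lemma qcast_F {m n : ℕ} (h : m = n) (h' : m + 1 = n + 1) (x : R (m + 1) ⧸ I (m + 1)) :
    F n (qcast I h' x) = qcast I h (F m x) := by
  subst h
  rfl

lemma mapPq {m n : ℕ} (h : m = n) :
    (Pq I Ipill m).map (qcast I h) = Pq I Ipill n := by
  subst h
  exact Ideal.map_id _

lemma qcast_span {m n : ℕ} (h : m = n) (x : R m ⧸ I m) :
    Ideal.span {qcast I h x} = (Ideal.span {x}).map (qcast I h) := by
  rw [Ideal.map_span, Set.image_singleton]

end Aux

/-- For a perfectoid tower with a system of perfectoid pillars `(I_i)`,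
and `I_j^{s♭} := ker (π_j ∘ Φ^{(j)}_0)`: an element `f ∈ R_j^{s♭}` generates `I_j^{s♭}`
iff for every `i` the component `Φ^{(j)}_i f` generates `I_{j+i}·(R_{j+i}/I₀R_{j+i})`.
In particular `I_j^{s♭}` is principal and `(I_{j+1}^{s♭})^p = I_j^{s♭}R_{j+1}^{s♭}`. -/
theorem stmt14 (p : ℕ) (hp : p.Prime)
    (R : ℕ → Type u) [∀ i, CommRing (R i)]
    (t : ∀ i, R i →+* R (i + 1))
    (I : ∀ i, Ideal (R i))
    (hpI : (p : R 0) ∈ I 0)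
    (hIsucc : ∀ i, I (i + 1) = (I i).map (t i))
    (tbar : ∀ i, (R i ⧸ I i) →+* (R (i + 1) ⧸ I (i + 1)))
    (htbar : ∀ i (x : R i),
      tbar i (Ideal.Quotient.mk (I i) x) = Ideal.Quotient.mk (I (i + 1)) (t i x))
    (htbarInj : ∀ i, Function.Injective (tbar i))
    (F : ∀ i, (R (i + 1) ⧸ I (i + 1)) →+* (R i ⧸ I i))
    (hF : ∀ i (x : R (i + 1) ⧸ I (i + 1)), tbar i (F i x) = x ^ p)
    (hFsurj : ∀ i, Function.Surjective (F i))
    (hJac : ∀ i, I i ≤ (⊥ : Ideal (R i)).jacobson)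
    (hI0prin : (I 0).IsPrincipal)
    (I1e : ∀ i, Ideal (R (i + 1)))
    (hI1prin : (I1e 0).IsPrincipal)
    (hI1pow : I1e 0 ^ p = I 1)
    (hI1es : ∀ i, I1e (i + 1) = (I1e i).map (t (i + 1)))
    (hkerF : ∀ i, RingHom.ker (F i) = (I1e i).map (Ideal.Quotient.mk (I (i + 1))))
    (htorz : ∀ i, ∀ a ∈ I i, ∀ x ∈ torSet (I i), a * x = 0)
    (hFtor : ∀ i, ∃ G : torSet (I (i + 1)) → torSet (I i), Function.Bijective G ∧
      ∀ x : torSet (I (i + 1)),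
        Ideal.Quotient.mk (I i) (G x : R i) = F i (Ideal.Quotient.mk (I (i + 1)) (x : R (i + 1))))
    (ts : ∀ j, Tilt I F j →+* Tilt I F (j + 1))
    (hts : ∀ (j : ℕ) (a : Tilt I F j) (i : ℕ),
      (ts j a).1 i = qcast I (by omega : (j + i) + 1 = (j + 1) + i) (tbar (j + i) (a.1 i)))
    (Ipill : ∀ i, Ideal (R i))
    (hpill0 : Ipill 0 = I 0) (hpill1 : Ipill 1 = I1e 0)
    (hpillPrin : ∀ i, (Ipill i).IsPrincipal)
    (hpill : ∀ i, Ideal.comap (F i) ((Ipill i).map (Ideal.Quotient.mk (I i)))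
        = (Ipill (i + 1)).map (Ideal.Quotient.mk (I (i + 1))))
    (j : ℕ) :
    (∀ f : Tilt I F j,
      RingHom.ker ((Ideal.Quotient.mk ((Ipill j).map (Ideal.Quotient.mk (I j)))).comp
          (proj I F j 0)) = Ideal.span {f} ↔
        ∀ i : ℕ, (Ipill (j + i)).map (Ideal.Quotient.mk (I (j + i)))
          = Ideal.span {proj I F j i f}) ∧
    (RingHom.ker ((Ideal.Quotient.mk ((Ipill j).map (Ideal.Quotient.mk (I j)))).comp
        (proj I F j 0))).IsPrincipal ∧
    RingHom.ker ((Ideal.Quotient.mk ((Ipill (j + 1)).map (Ideal.Quotient.mk (I (j + 1))))).comp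
        (proj I F (j + 1) 0)) ^ p
      = (RingHom.ker ((Ideal.Quotient.mk ((Ipill j).map (Ideal.Quotient.mk (I j)))).comp
          (proj I F j 0))).map (ts j) := by
  classical
  obtain ⟨fg, hfg⟩ := genChain p t I tbar F Ipill hp htbar htbarInj hF hFsurj I1e hI1prin
    hI1es hkerF hpill0 hpill1 hpillPrin hpill j
  have hker0 : RingHom.ker ((Ideal.Quotient.mk
      ((Ipill j).map (Ideal.Quotient.mk (I j)))).comp (proj I F j 0))
      = Ideal.span {fg} :=
    kerEqSpan p t I tbar F Ipill hp htbar htbarInj hF hFsurj I1e hI1prin hI1es hkerF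
      hpill0 hpill1 hpill j fg hfg
  refine ⟨?_, ⟨⟨fg, hker0⟩⟩, ?_⟩
  · intro f
    exact mainIff p t I tbar F Ipill hp htbar htbarInj hF hFsurj I1e hI1prin hI1es hkerF
      hpill0 hpill1 hpillPrin hpill j f
  · -- part 3
    have e : ∀ i : ℕ, j + (i + 1) = (j + 1) + i := fun i => by omega
    have hf'mem : (fun i => qcast I (e i) (fg.1 (i + 1)))
        ∈ Tilt I F (j + 1) := by
      intro i
      show F ((j + 1) + i) (qcast I (e (i + 1)) (fg.1 (i + 2))) = qcast I (e i) (fg.1 (i + 1))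
      have h1 : F ((j + 1) + i) (qcast I (e (i + 1)) (fg.1 (i + 2)))
          = qcast I (e i) (F (j + (i + 1)) (fg.1 (i + 2))) :=
        qcast_F I F (e i) (e (i + 1)) (fg.1 (i + 2))
      rw [h1, fg.2 (i + 1)]
    set f' : Tilt I F (j + 1) := ⟨fun i => qcast I (e i) (fg.1 (i + 1)), hf'mem⟩ with hf'def
    have hf'comp : ∀ i, Ideal.span {f'.1 i} = Pq I Ipill ((j + 1) + i) := by
      intro i
      calc Ideal.span {f'.1 i}
          = (Ideal.span {fg.1 (i + 1)}).map (qcast I (e i)) := qcast_span I (e i) _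
        _ = (Pq I Ipill (j + (i + 1))).map (qcast I (e i)) := by rw [hfg (i + 1)]
        _ = Pq I Ipill ((j + 1) + i) := mapPq I Ipill (e i)
    have hker1 : RingHom.ker ((Ideal.Quotient.mk
        ((Ipill (j + 1)).map (Ideal.Quotient.mk (I (j + 1))))).comp (proj I F (j + 1) 0))
        = Ideal.span {f'} :=
      kerEqSpan p t I tbar F Ipill hp htbar htbarInj hF hFsurj I1e hI1prin hI1es hkerF
        hpill0 hpill1 hpill (j + 1) f' hf'comp
    rw [hker1, hker0, Ideal.span_singleton_pow, Ideal.map_span, Set.image_singleton]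
    have hmain : f' ^ p = ts j fg := by
      apply Subtype.ext
      funext i
      have h2' : fg.1 (i + 1) ^ p = tbar (j + i) (fg.1 i) := by
        rw [← hF (j + i) (fg.1 (i + 1)), fg.2 i]
      calc (f' ^ p).1 i = (f'.1 i) ^ p := congrFun (SubmonoidClass.coe_pow f' p) i
        _ = qcast I (e i) (fg.1 (i + 1) ^ p) := (map_pow (qcast I (e i)) _ p).symm
        _ = qcast I (e i) (tbar (j + i) (fg.1 i)) := by rw [h2']
        _ = (ts j fg).1 i := by exact (hts j fg i).symm
    rw [hmain]

end PaperTower
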